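/- Composability of Poly-typable Terms: Let t be a closed term that is poly-typable by A->B with respect to two closed terms s and s' of type A, and let t' be a closed term that is poly-typable by B->C with respect to the two closed terms t s and t s'. Then fn x=>(t'(t x)) is poly-typable by A->C with respect to s and s'. -/

import Mathlib

/-! Linear λ-calculus preamble -/

/-- Types of the linear λ-calculus: type variables, tensor product, linear implication. -/
inductive Ty : Type
  | tvar : ℕ → Ty
  | tensor : Ty → Ty → Ty
  | arrow : Ty → Ty → Ty
deriving DecidableEq

/-- Terms of the linear λ-calculus. -/
inductive Tm : Type
  | var : ℕ → Tm
  | app : Tm → Tm → Tm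
  | lam : ℕ → Tm → Tm
  | pair : Tm → Tm → Tm
  | letp : ℕ → ℕ → Tm → Tm → Tm
deriving DecidableEq

/-- Free variables of a term. -/
def Tm.fv : Tm → Finset ℕ
  | .var x => {x}
  | .app t s => t.fv ∪ s.fv
  | .lam x t => t.fv \ {x}
  | .pair t s => t.fv ∪ s.fv
  | .letp x y s t => s.fv ∪ (t.fv \ {x, y})

/-- Substitution of a term for a variable. -/
def Tm.subst : Tm → ℕ → Tm → Tm
  | .var y, x, s => if y = x then s else .var y
  | .app t u, x, s => .app (t.subst x s) (u.subst x s)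
  | .lam y t, x, s => if y = x then .lam y t else .lam y (t.subst x s)
  | .pair t u, x, s => .pair (t.subst x s) (u.subst x s)
  | .letp y z u t, x, s =>
      .letp y z (u.subst x s) (if x = y ∨ x = z then t else t.subst x s)

/-- Typing contexts: finite lists of typed variables. -/
abbrev Ctxt := List (ℕ × Ty)

/-- The linear type assignment system. -/
inductive Typed : Ctxt → Tm → Ty → Prop
  | var (x : ℕ) (A : Ty) : Typed [(x, A)] (.var x) A
  | exch (Γ Δ : Ctxt) (x y : ℕ) (A B : Ty) (t : Tm) (C : Ty) :
      Typed (Γ ++ (x, A) :: (y, B) :: Δ) t C →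
      Typed (Γ ++ (y, B) :: (x, A) :: Δ) t C
  | lam (x : ℕ) (A : Ty) (Γ : Ctxt) (t : Tm) (B : Ty) :
      Typed ((x, A) :: Γ) t B → Typed Γ (.lam x t) (.arrow A B)
  | app (Γ Δ : Ctxt) (t s : Tm) (A B : Ty) :
      Typed Γ t (.arrow A B) → Typed Δ s A → Typed (Γ ++ Δ) (.app t s) B
  | pair (Γ Δ : Ctxt) (s t : Tm) (A B : Ty) :
      Typed Γ s A → Typed Δ t B → Typed (Γ ++ Δ) (.pair s t) (.tensor A B)
  | letp (Γ Δ : Ctxt) (s t : Tm) (x y : ℕ) (A B C : Ty) :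
      Typed Γ s (.tensor A B) → Typed ((x, A) :: (y, B) :: Δ) t C →
      Typed (Γ ++ Δ) (.letp x y s t) C

/-- One-hole contexts. -/
inductive Cx : Type
  | hole : Cx
  | appL : Cx → Tm → Cx
  | appR : Tm → Cx → Cx
  | pairL : Cx → Tm → Cx
  | pairR : Tm → Cx → Cx
  | lam : ℕ → Cx → Cx
  | letL : ℕ → ℕ → Cx → Tm → Cx
  | letR : ℕ → ℕ → Tm → Cx → Cx

/-- Plugging a term into a one-hole context. -/
def Cx.plug : Cx → Tm → Tm
  | .hole, u => u
  | .appL C t, u => .app (C.plug u) t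
  | .appR t C, u => .app t (C.plug u)
  | .pairL C t, u => .pair (C.plug u) t
  | .pairR t C, u => .pair t (C.plug u)
  | .lam x C, u => .lam x (C.plug u)
  | .letL x y C t, u => .letp x y (C.plug u) t
  | .letR x y t C, u => .letp x y t (C.plug u)

/-- Variables captured by a context. -/
def Cx.cv : Cx → Finset ℕ
  | .hole => ∅
  | .appL C _ => C.cv
  | .appR _ C => C.cv
  | .pairL C _ => C.cv
  | .pairR _ C => C.cv
  | .lam x C => insert x C.cv
  | .letL _ _ C _ => C.cv
  | .letR x y _ C => insert x (insert y C.cv)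

/-- Free variables of a context. -/
def Cx.fv : Cx → Finset ℕ
  | .hole => ∅
  | .appL C t => C.fv ∪ t.fv
  | .appR t C => t.fv ∪ C.fv
  | .pairL C t => C.fv ∪ t.fv
  | .pairR t C => t.fv ∪ C.fv
  | .lam x C => C.fv \ {x}
  | .letL x y C t => C.fv ∪ (t.fv \ {x, y})
  | .letR x y t C => t.fv ∪ (C.fv \ {x, y})

/-- The base βη-reduction rules. -/
inductive StepBase : Tm → Tm → Prop
  | beta1 (x : ℕ) (t s : Tm) : StepBase (.app (.lam x t) s) (t.subst x s)
  | beta2 (x y : ℕ) (u v w : Tm) :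
      StepBase (.letp x y (.pair u v) w) ((w.subst x u).subst y v)
  | eta1 (x : ℕ) (t : Tm) : x ∉ t.fv → StepBase (.lam x (.app t (.var x))) t
  | eta2 (x y : ℕ) (t : Tm) : x ≠ y → x ∉ t.fv → y ∉ t.fv →
      StepBase (.letp x y t (.pair (.var x) (.var y))) t

/-- Closure of a relation under arbitrary one-hole contexts. -/
def Congr (R : Tm → Tm → Prop) (t u : Tm) : Prop :=
  ∃ (C : Cx) (a b : Tm), R a b ∧ t = C.plug a ∧ u = C.plug b

/-- One-step βη-reduction (congruent closure of the base rules): →βη. -/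
def Step : Tm → Tm → Prop := Congr StepBase

/-- The base commutative conversion rule ↔c. -/
def CommBase (t u : Tm) : Prop :=
  ∃ (C : Cx) (x y : ℕ) (s w : Tm),
    x ∉ C.fv ∧ y ∉ C.fv ∧ (∀ z ∈ C.cv, z ∉ s.fv) ∧
    t = C.plug (.letp x y s w) ∧ u = .letp x y s (C.plug w)

/-- The congruent equivalence relation =c generated by ↔c. -/
def Ceq : Tm → Tm → Prop := Relation.EqvGen (Congr CommBase)

/-- One-step reduction modulo commutative conversion: →βηc. -/
def StepC (t u : Tm) : Prop := ∃ t' u', Ceq t t' ∧ Step t' u' ∧ Ceq u' u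

/-- The equality =βηc : the least congruent equivalence relation containing ↔c and →βηc. -/
def BEqc : Tm → Tm → Prop :=
  Relation.EqvGen (Congr (fun a b => CommBase a b ∨ StepC a b))

/-- Type substitutions and their action on types. -/
def Ty.subst : Ty → (ℕ → Ty) → Ty
  | .tvar a, θ => θ a
  | .tensor A B, θ => .tensor (A.subst θ) (B.subst θ)
  | .arrow A B, θ => .arrow (A.subst θ) (B.subst θ)

/-- Action of a type substitution on a typing context. -/
def CtxtSubst (Γ : Ctxt) (θ : ℕ → Ty) : Ctxt := Γ.map (fun p => (p.1, p.2.subst θ))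

/-- `A` is the principal type of the closed term `t`. -/
def IsPT (t : Tm) (A : Ty) : Prop :=
  Typed [] t A ∧ ∀ A', Typed [] t A' → ∃ θ, A' = A.subst θ

/-- Iterated linear implication `A1->...->An->B`. -/
def arrows (As : List Ty) (B : Ty) : Ty := As.foldr .arrow B

/-- Iterated application `t s1 ⋯ sn`. -/
def apps (t : Tm) (ss : List Tm) : Tm := ss.foldl .app t

/-- `t` is poly-typable by `A1->...->An->B` with respect to closed terms `s1,...,sn`
of types `A1,...,An`. -/
def PolyTypableN (t : Tm) (As : List Ty) (B : Ty) (ss : List Tm) : Prop :=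
  (∃ (As' : List Ty) (B' : Ty), As'.length = As.length ∧ Typed [] t (arrows As' B')) ∧
  List.Forall₂ (fun s A => Typed [] s A) ss As ∧
  ∃ (θ : ℕ → Ty) (PTt : Ty) (As'' : List Ty),
    IsPT t PTt ∧ PTt.subst θ = arrows As'' B ∧
    List.Forall₂ (fun s A'' => ∃ P, IsPT s P ∧ P.subst θ = A'') ss As''

/-! ### Auxiliary development: type variables, sizes, substitution lemmas -/

/-- Variables occurring in a type. -/
def Ty.vars : Ty → Finset ℕ
  | .tvar a => {a}
  | .tensor A B => A.vars ∪ B.vars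
  | .arrow A B => A.vars ∪ B.vars

/-- Size of a type. -/
def Ty.size : Ty → ℕ
  | .tvar _ => 1
  | .tensor A B => A.size + B.size + 1
  | .arrow A B => A.size + B.size + 1

/-- The substitution replacing a single variable. -/
def sng (a : ℕ) (T : Ty) : ℕ → Ty := fun b => if b = a then T else .tvar b

theorem subst_comp (u : Ty) (f g : ℕ → Ty) :
    (u.subst f).subst g = u.subst (fun b => (f b).subst g) := by
  induction u with
  | tvar a => rfl
  | tensor A B ihA ihB => simp [Ty.subst, ihA, ihB]
  | arrow A B ihA ihB => simp [Ty.subst, ihA, ihB]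

theorem subst_sng_notin {a : ℕ} {T : Ty} (u : Ty) (h : a ∉ u.vars) :
    u.subst (sng a T) = u := by
  induction u with
  | tvar b =>
      simp [Ty.vars] at h
      simp only [Ty.subst, sng]
      rw [if_neg (by omega)]
  | tensor A B ihA ihB =>
      simp [Ty.vars] at h
      simp [Ty.subst, ihA h.1, ihB h.2]
  | arrow A B ihA ihB =>
      simp [Ty.vars] at h
      simp [Ty.subst, ihA h.1, ihB h.2]

theorem mem_vars_subst {v : ℕ} (u : Ty) (f : ℕ → Ty) :
    v ∈ (u.subst f).vars ↔ ∃ b ∈ u.vars, v ∈ (f b).vars := by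
  induction u with
  | tvar a => simp [Ty.subst, Ty.vars]
  | tensor A B ihA ihB =>
      simp [Ty.subst, Ty.vars, ihA, ihB]
      constructor
      · rintro (⟨b, hb, hv⟩ | ⟨b, hb, hv⟩) <;> exact ⟨b, by tauto, hv⟩
      · rintro ⟨b, hb | hb, hv⟩
        · exact Or.inl ⟨b, hb, hv⟩
        · exact Or.inr ⟨b, hb, hv⟩
  | arrow A B ihA ihB =>
      simp [Ty.subst, Ty.vars, ihA, ihB]
      constructor
      · rintro (⟨b, hb, hv⟩ | ⟨b, hb, hv⟩) <;> exact ⟨b, by tauto, hv⟩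
      · rintro ⟨b, hb | hb, hv⟩
        · exact Or.inl ⟨b, hb, hv⟩
        · exact Or.inr ⟨b, hb, hv⟩

theorem size_le_subst {a : ℕ} (u : Ty) (f : ℕ → Ty) (h : a ∈ u.vars) :
    (f a).size ≤ (u.subst f).size := by
  induction u with
  | tvar b => simp [Ty.vars] at h; subst h; simp [Ty.subst]
  | tensor A B ihA ihB =>
      simp [Ty.vars] at h
      rcases h with h | h
      · have := ihA h; simp [Ty.subst, Ty.size]; omega
      · have := ihB h; simp [Ty.subst, Ty.size]; omega
  | arrow A B ihA ihB =>
      simp [Ty.vars] at h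
      rcases h with h | h
      · have := ihA h; simp [Ty.subst, Ty.size]; omega
      · have := ihB h; simp [Ty.subst, Ty.size]; omega

theorem size_lt_subst {a : ℕ} (u : Ty) (f : ℕ → Ty) (h : a ∈ u.vars)
    (hne : u ≠ .tvar a) : (f a).size < (u.subst f).size := by
  induction u with
  | tvar b => simp [Ty.vars] at h; subst h; exact absurd rfl hne
  | tensor A B ihA ihB =>
      simp [Ty.vars] at h
      rcases h with h | h
      · have := size_le_subst A f h; simp [Ty.subst, Ty.size]; omega
      · have := size_le_subst B f h; simp [Ty.subst, Ty.size]; omega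
  | arrow A B ihA ihB =>
      simp [Ty.vars] at h
      rcases h with h | h
      · have := size_le_subst A f h; simp [Ty.subst, Ty.size]; omega
      · have := size_le_subst B f h; simp [Ty.subst, Ty.size]; omega

/-! ### Constraint lists and unification -/

/-- Variables of a constraint list. -/
def lvars : List (Ty × Ty) → Finset ℕ
  | [] => ∅
  | p :: l => p.1.vars ∪ p.2.vars ∪ lvars l

/-- Size of a constraint list. -/
def lsize : List (Ty × Ty) → ℕ
  | [] => 0
  | p :: l => p.1.size + p.2.size + lsize l

/-- Apply a single-variable substitution to a constraint list. -/
def substC (a : ℕ) (T : Ty) (l : List (Ty × Ty)) : List (Ty × Ty) :=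
  l.map fun p => (p.1.subst (sng a T), p.2.subst (sng a T))

theorem lvars_substC {a : ℕ} {T : Ty} (h : a ∉ T.vars) (l : List (Ty × Ty)) :
    lvars (substC a T l) ⊆ (T.vars ∪ lvars l).erase a := by
  induction l with
  | nil => simp [substC, lvars]
  | cons p l ih =>
      intro v hv
      simp only [substC, List.map_cons, lvars, Finset.mem_union] at hv
      rcases hv with hv | hv
      · rcases hv with hv | hv <;>
        · rw [mem_vars_subst] at hv
          obtain ⟨b, hb, hvb⟩ := hv
          by_cases hba : b = a
          · subst hba
            simp [sng] at hvb
            refine Finset.mem_erase.2 ⟨?_, ?_⟩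
            · intro hva; subst hva; exact h hvb
            · simp [lvars]; tauto
          · simp [sng, hba, Ty.vars] at hvb
            subst hvb
            refine Finset.mem_erase.2 ⟨hba, ?_⟩
            simp [lvars]; tauto
      · have := ih hv
        rw [Finset.mem_erase] at this ⊢
        refine ⟨this.1, ?_⟩
        have h2 := this.2
        simp [lvars] at h2 ⊢
        tauto

theorem lvars_subset_cons (p : Ty × Ty) (l : List (Ty × Ty)) : lvars l ⊆ lvars (p :: l) := by
  simp [lvars]; intro v hv; simp; tauto

theorem lexHelp {a c b d : ℕ} (h : a < c ∨ (a = c ∧ b < d)) :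
    Prod.Lex (· < ·) (· < ·) (a, b) (c, d) := by
  rcases h with h | ⟨rfl, h⟩
  · exact Prod.Lex.left _ _ h
  · exact Prod.Lex.right _ h

theorem card_lt_of_elim {a : ℕ} {T : Ty} (h : a ∉ T.vars) (l : List (Ty × Ty)) :
    (lvars (substC a T l)).card < (lvars ((Ty.tvar a, T) :: l)).card := by
  have h1 : lvars (substC a T l) ⊆ (lvars ((Ty.tvar a, T) :: l)).erase a := by
    refine (lvars_substC h l).trans (Finset.erase_subset_erase a ?_)
    intro v hv
    simp [lvars, Ty.vars] at hv ⊢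
    tauto
  have h2 : a ∈ lvars ((Ty.tvar a, T) :: l) := by simp [lvars, Ty.vars]
  calc (lvars (substC a T l)).card ≤ _ := Finset.card_le_card h1
    _ < _ := Finset.card_erase_lt_of_mem h2

theorem card_lt_of_elim' {a : ℕ} {T : Ty} (h : a ∉ T.vars) (l : List (Ty × Ty)) :
    (lvars (substC a T l)).card < (lvars ((T, Ty.tvar a) :: l)).card := by
  have h1 : lvars (substC a T l) ⊆ (lvars ((T, Ty.tvar a) :: l)).erase a := by
    refine (lvars_substC h l).trans (Finset.erase_subset_erase a ?_)
    intro v hv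
    simp [lvars, Ty.vars] at hv ⊢
    tauto
  have h2 : a ∈ lvars ((T, Ty.tvar a) :: l) := by simp [lvars, Ty.vars]
  calc (lvars (substC a T l)).card ≤ _ := Finset.card_le_card h1
    _ < _ := Finset.card_erase_lt_of_mem h2

/-- First-order unification. -/
def unify : List (Ty × Ty) → Option (List (ℕ × Ty))
  | [] => some []
  | (Ty.tvar a, T) :: rest =>
    if T = Ty.tvar a then unify rest
    else if _h : a ∈ T.vars then none
    else (unify (substC a T rest)).map fun m => (a, T) :: m
  | (Ty.tensor A B, Ty.tvar a) :: rest =>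
    if _h : a ∈ (Ty.tensor A B).vars then none
    else (unify (substC a (Ty.tensor A B) rest)).map fun m => (a, Ty.tensor A B) :: m
  | (Ty.arrow A B, Ty.tvar a) :: rest =>
    if _h : a ∈ (Ty.arrow A B).vars then none
    else (unify (substC a (Ty.arrow A B) rest)).map fun m => (a, Ty.arrow A B) :: m
  | (Ty.tensor A B, Ty.tensor A' B') :: rest => unify ((A, A') :: (B, B') :: rest)
  | (Ty.arrow A B, Ty.arrow A' B') :: rest => unify ((A, A') :: (B, B') :: rest)
  | (Ty.tensor _ _, Ty.arrow _ _) :: _ => none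
  | (Ty.arrow _ _, Ty.tensor _ _) :: _ => none
termination_by l => ((lvars l).card, lsize l)
decreasing_by
  · apply lexHelp
    rcases lt_or_eq_of_le (Finset.card_le_card (lvars_subset_cons _ _)) with h | h
    · exact Or.inl h
    · refine Or.inr ⟨h, ?_⟩
      simp only [lsize, Ty.size]
      omega
  · exact lexHelp (Or.inl (card_lt_of_elim _h rest))
  · exact lexHelp (Or.inl (card_lt_of_elim' _h rest))
  · exact lexHelp (Or.inl (card_lt_of_elim' _h rest))
  · apply lexHelp
    have hv : lvars ((A, A') :: (B, B') :: rest) = lvars ((Ty.tensor A B, Ty.tensor A' B') :: rest) := by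
      simp [lvars, Ty.vars]
      ext v; simp; tauto
    refine Or.inr ⟨by rw [hv], ?_⟩
    simp [lsize, Ty.size]; omega
  · apply lexHelp
    have hv : lvars ((A, A') :: (B, B') :: rest) = lvars ((Ty.arrow A B, Ty.arrow A' B') :: rest) := by
      simp [lvars, Ty.vars]
      ext v; simp; tauto
    refine Or.inr ⟨by rw [hv], ?_⟩
    simp [lsize, Ty.size]; omega
/-! ### Substitution denoted by a unifier, soundness and completeness -/

/-- The substitution represented by a list of bindings (applied left to right). -/
def subFn : List (ℕ × Ty) → ℕ → Ty
  | [] => Ty.tvar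
  | (a, T) :: m => fun b => (sng a T b).subst (subFn m)

theorem subst_subFn_cons (u : Ty) (a : ℕ) (T : Ty) (m : List (ℕ × Ty)) :
    u.subst (subFn ((a, T) :: m)) = (u.subst (sng a T)).subst (subFn m) := by
  rw [subst_comp]; rfl

/-- `σ` unifies all constraints in `l`. -/
def Unifies (σ : ℕ → Ty) (l : List (Ty × Ty)) : Prop :=
  ∀ p ∈ l, p.1.subst σ = p.2.subst σ

theorem sng_absorb {σ : ℕ → Ty} {a : ℕ} {T : Ty} (h : σ a = T.subst σ) (u : Ty) :
    (u.subst (sng a T)).subst σ = u.subst σ := by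
  rw [subst_comp]
  congr 1
  funext b
  by_cases hb : b = a
  · subst hb; simp [sng, h]
  · simp [sng, hb, Ty.subst]

private theorem elim_step {a : ℕ} {T : Ty} {rest : List (Ty × Ty)} {m' : List (ℕ × Ty)}
    (hocc : a ∉ T.vars)
    (ih : Unifies (subFn m') (substC a T rest)) :
    Unifies (subFn ((a, T) :: m')) ((Ty.tvar a, T) :: rest) := by
  intro p hp
  rcases List.mem_cons.mp hp with hp | hp
  · subst hp
    show (Ty.tvar a).subst (subFn ((a,T) :: m')) = T.subst (subFn ((a,T) :: m'))
    rw [subst_subFn_cons, subst_subFn_cons, subst_sng_notin T hocc]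
    show (sng a T a).subst (subFn m') = _
    simp [sng]
  · have := ih (p.1.subst (sng a T), p.2.subst (sng a T))
      (by simp only [substC, List.mem_map]; exact ⟨p, hp, rfl⟩)
    simpa [subst_subFn_cons] using this

private theorem unifies_swap_head {σ : ℕ → Ty} {u v : Ty} {rest : List (Ty × Ty)}
    (h : Unifies σ ((u, v) :: rest)) : Unifies σ ((v, u) :: rest) := by
  intro p hp
  rcases List.mem_cons.mp hp with hp | hp
  · subst hp; exact (h (u, v) (by simp)).symm
  · exact h p (by simp [hp])

theorem unify_sound : ∀ l m, unify l = some m → Unifies (subFn m) l := by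
  intro l
  induction l using unify.induct with
  | case1 => intro m _ p hp; simp at hp
  | case2 a rest ih =>
      intro m hm p hp
      rw [unify, if_pos rfl] at hm
      rcases List.mem_cons.mp hp with hp | hp
      · subst hp; rfl
      · exact ih m hm p hp
  | case3 a T rest hT hocc =>
      intro m hm
      rw [unify, if_neg hT, dif_pos hocc] at hm
      simp at hm
  | case4 a T rest hT hocc ih =>
      intro m hm
      rw [unify, if_neg hT, dif_neg hocc] at hm
      rcases hmap : unify (substC a T rest) with _ | m' <;> rw [hmap] at hm <;> simp at hm
      subst hm
      exact elim_step hocc (ih m' hmap)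
  | case5 A B a rest hocc =>
      intro m hm
      rw [unify, dif_pos hocc] at hm
      simp at hm
  | case6 A B a rest hocc ih =>
      intro m hm
      rw [unify, dif_neg hocc] at hm
      rcases hmap : unify (substC a (Ty.tensor A B) rest) with _ | m' <;>
        rw [hmap] at hm <;> simp at hm
      subst hm
      exact unifies_swap_head (elim_step hocc (ih m' hmap))
  | case7 A B a rest hocc =>
      intro m hm
      rw [unify, dif_pos hocc] at hm
      simp at hm
  | case8 A B a rest hocc ih =>
      intro m hm
      rw [unify, dif_neg hocc] at hm
      rcases hmap : unify (substC a (Ty.arrow A B) rest) with _ | m' <;>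
        rw [hmap] at hm <;> simp at hm
      subst hm
      exact unifies_swap_head (elim_step hocc (ih m' hmap))
  | case9 A B A' B' rest ih =>
      intro m hm p hp
      rw [unify] at hm
      have h2 := ih m hm
      rcases List.mem_cons.mp hp with hp | hp
      · subst hp
        have e1 := h2 (A, A') (by simp)
        have e2 := h2 (B, B') (by simp)
        show (Ty.tensor A B).subst _ = (Ty.tensor A' B').subst _
        simp only [Ty.subst] at e1 e2 ⊢
        rw [e1, e2]
      · exact h2 p (by simp [hp])
  | case10 A B A' B' rest ih =>
      intro m hm p hp
      rw [unify] at hm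
      have h2 := ih m hm
      rcases List.mem_cons.mp hp with hp | hp
      · subst hp
        have e1 := h2 (A, A') (by simp)
        have e2 := h2 (B, B') (by simp)
        show (Ty.arrow A B).subst _ = (Ty.arrow A' B').subst _
        simp only [Ty.subst] at e1 e2 ⊢
        rw [e1, e2]
      · exact h2 p (by simp [hp])
  | case11 => intro m hm; rw [unify] at hm; simp at hm
  | case12 => intro m hm; rw [unify] at hm; simp at hm
/-! ### Completeness: every unifiable constraint list has a most general unifier -/

private theorem occurs_contra {σ : ℕ → Ty} {a : ℕ} {T : Ty}
    (h : σ a = T.subst σ) (hne : T ≠ Ty.tvar a) (hocc : a ∈ T.vars) : False := by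
  have := size_lt_subst T σ hocc hne
  rw [← h] at this
  omega

private theorem unifies_substC {σ : ℕ → Ty} {a : ℕ} {T : Ty} {rest : List (Ty × Ty)}
    (h : σ a = T.subst σ) (hrest : Unifies σ rest) : Unifies σ (substC a T rest) := by
  intro p hp
  simp only [substC, List.mem_map] at hp
  obtain ⟨q, hq, rfl⟩ := hp
  show (q.1.subst (sng a T)).subst σ = (q.2.subst (sng a T)).subst σ
  rw [sng_absorb h, sng_absorb h]
  exact hrest q hq

private theorem unifies_tail {σ : ℕ → Ty} {p : Ty × Ty} {rest : List (Ty × Ty)}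
    (h : Unifies σ (p :: rest)) : Unifies σ rest :=
  fun q hq => h q (by simp [hq])

theorem unify_complete : ∀ l (σ : ℕ → Ty), Unifies σ l →
    ∃ m, unify l = some m ∧ ∀ b, σ b = (subFn m b).subst σ := by
  intro l
  induction l using unify.induct with
  | case1 =>
      intro σ _
      exact ⟨[], by rw [unify], fun b => rfl⟩
  | case2 a rest ih =>
      intro σ hσ
      obtain ⟨m, hm, hfact⟩ := ih σ (unifies_tail hσ)
      exact ⟨m, by rw [unify, if_pos rfl]; exact hm, hfact⟩
  | case3 a T rest hT hocc =>
      intro σ hσ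
      have h := hσ (Ty.tvar a, T) (by simp)
      exact absurd (occurs_contra h hT hocc) (fun f => f)
  | case4 a T rest hT hocc ih =>
      intro σ hσ
      have h : σ a = T.subst σ := hσ (Ty.tvar a, T) (by simp)
      obtain ⟨m, hm, hfact⟩ := ih σ (unifies_substC h (unifies_tail hσ))
      refine ⟨(a, T) :: m, ?_, ?_⟩
      · rw [unify, if_neg hT, dif_neg hocc, hm]; rfl
      · intro b
        show σ b = ((sng a T b).subst (subFn m)).subst σ
        rw [subst_comp]
        have : (fun c => (subFn m c).subst σ) = σ := funext fun c => (hfact c).symm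
        rw [this]
        by_cases hb : b = a
        · subst hb; simpa [sng] using h
        · simp [sng, hb, Ty.subst]
  | case5 A B a rest hocc =>
      intro σ hσ
      have h := (hσ (Ty.tensor A B, Ty.tvar a) (by simp)).symm
      exact absurd (occurs_contra h (by simp) hocc) (fun f => f)
  | case6 A B a rest hocc ih =>
      intro σ hσ
      have h : σ a = (Ty.tensor A B).subst σ := (hσ (Ty.tensor A B, Ty.tvar a) (by simp)).symm
      obtain ⟨m, hm, hfact⟩ := ih σ (unifies_substC h (unifies_tail hσ))
      refine ⟨(a, Ty.tensor A B) :: m, ?_, ?_⟩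
      · rw [unify, dif_neg hocc, hm]; rfl
      · intro b
        show σ b = ((sng a _ b).subst (subFn m)).subst σ
        rw [subst_comp]
        have : (fun c => (subFn m c).subst σ) = σ := funext fun c => (hfact c).symm
        rw [this]
        by_cases hb : b = a
        · subst hb; simpa [sng] using h
        · simp [sng, hb, Ty.subst]
  | case7 A B a rest hocc =>
      intro σ hσ
      have h := (hσ (Ty.arrow A B, Ty.tvar a) (by simp)).symm
      exact absurd (occurs_contra h (by simp) hocc) (fun f => f)
  | case8 A B a rest hocc ih =>
      intro σ hσ
      have h : σ a = (Ty.arrow A B).subst σ := (hσ (Ty.arrow A B, Ty.tvar a) (by simp)).symm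
      obtain ⟨m, hm, hfact⟩ := ih σ (unifies_substC h (unifies_tail hσ))
      refine ⟨(a, Ty.arrow A B) :: m, ?_, ?_⟩
      · rw [unify, dif_neg hocc, hm]; rfl
      · intro b
        show σ b = ((sng a _ b).subst (subFn m)).subst σ
        rw [subst_comp]
        have : (fun c => (subFn m c).subst σ) = σ := funext fun c => (hfact c).symm
        rw [this]
        by_cases hb : b = a
        · subst hb; simpa [sng] using h
        · simp [sng, hb, Ty.subst]
  | case9 A B A' B' rest ih =>
      intro σ hσ
      have h := hσ (Ty.tensor A B, Ty.tensor A' B') (by simp)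
      simp only [Ty.subst, Ty.tensor.injEq] at h
      have hσ' : Unifies σ ((A, A') :: (B, B') :: rest) := by
        intro p hp
        rcases List.mem_cons.mp hp with hp | hp
        · subst hp; exact h.1
        rcases List.mem_cons.mp hp with hp | hp
        · subst hp; exact h.2
        · exact hσ p (by simp [hp])
      obtain ⟨m, hm, hfact⟩ := ih σ hσ'
      exact ⟨m, by rw [unify]; exact hm, hfact⟩
  | case10 A B A' B' rest ih =>
      intro σ hσ
      have h := hσ (Ty.arrow A B, Ty.arrow A' B') (by simp)
      simp only [Ty.subst, Ty.arrow.injEq] at h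
      have hσ' : Unifies σ ((A, A') :: (B, B') :: rest) := by
        intro p hp
        rcases List.mem_cons.mp hp with hp | hp
        · subst hp; exact h.1
        rcases List.mem_cons.mp hp with hp | hp
        · subst hp; exact h.2
        · exact hσ p (by simp [hp])
      obtain ⟨m, hm, hfact⟩ := ih σ hσ'
      exact ⟨m, by rw [unify]; exact hm, hfact⟩
  | case11 =>
      intro σ hσ
      have h := hσ _ (List.mem_cons_self)
      simp [Ty.subst] at h
  | case12 =>
      intro σ hσ
      have h := hσ _ (List.mem_cons_self)
      simp [Ty.subst] at h
/-! ### Typing lemmas -/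

theorem typed_subst {Γ : Ctxt} {u : Tm} {T : Ty} (h : Typed Γ u T) (θ : ℕ → Ty) :
    Typed (CtxtSubst Γ θ) u (T.subst θ) := by
  induction h with
  | var x A => exact Typed.var x (A.subst θ)
  | exch Γ Δ x y A B t C h ih =>
      have e1 : CtxtSubst (Γ ++ (x, A) :: (y, B) :: Δ) θ =
          CtxtSubst Γ θ ++ (x, A.subst θ) :: (y, B.subst θ) :: CtxtSubst Δ θ := by
        simp [CtxtSubst]
      have e2 : CtxtSubst (Γ ++ (y, B) :: (x, A) :: Δ) θ =
          CtxtSubst Γ θ ++ (y, B.subst θ) :: (x, A.subst θ) :: CtxtSubst Δ θ := by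
        simp [CtxtSubst]
      rw [e1] at ih
      rw [e2]
      exact Typed.exch _ _ _ _ _ _ _ _ ih
  | lam x A Γ t B h ih =>
      exact Typed.lam x (A.subst θ) _ t (B.subst θ) ih
  | app Γ Δ t s A B h1 h2 ih1 ih2 =>
      have e : CtxtSubst (Γ ++ Δ) θ = CtxtSubst Γ θ ++ CtxtSubst Δ θ := by simp [CtxtSubst]
      rw [e]
      exact Typed.app _ _ _ _ _ _ ih1 ih2
  | pair Γ Δ s t A B h1 h2 ih1 ih2 =>
      have e : CtxtSubst (Γ ++ Δ) θ = CtxtSubst Γ θ ++ CtxtSubst Δ θ := by simp [CtxtSubst]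
      rw [e]
      exact Typed.pair _ _ _ _ _ _ ih1 ih2
  | letp Γ Δ s t x y A B C h1 h2 ih1 ih2 =>
      have e : CtxtSubst (Γ ++ Δ) θ = CtxtSubst Γ θ ++ CtxtSubst Δ θ := by simp [CtxtSubst]
      rw [e]
      exact Typed.letp _ _ _ _ _ _ _ _ _ ih1 ih2

theorem typed_subst_nil {u : Tm} {T : Ty} (h : Typed [] u T) (θ : ℕ → Ty) :
    Typed [] u (T.subst θ) :=
  typed_subst h θ

/-- Number of context entries a term consumes. -/
def Tm.vcount : Tm → ℕ
  | .var _ => 1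
  | .app t s => t.vcount + s.vcount
  | .lam _ t => t.vcount - 1
  | .pair t s => t.vcount + s.vcount
  | .letp _ _ s t => s.vcount + (t.vcount - 2)

theorem typed_vcount {Γ : Ctxt} {u : Tm} {T : Ty} (h : Typed Γ u T) :
    u.vcount = Γ.length := by
  induction h with
  | var x A => rfl
  | exch Γ Δ x y A B t C h ih => simpa using ih
  | lam x A Γ t B h ih => simp [Tm.vcount, ih]
  | app Γ Δ t s A B h1 h2 ih1 ih2 => simp [Tm.vcount, ih1, ih2]
  | pair Γ Δ s t A B h1 h2 ih1 ih2 => simp [Tm.vcount, ih1, ih2]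
  | letp Γ Δ s t x y A B C h1 h2 ih1 ih2 =>
      simp [Tm.vcount, ih1] at *
      omega

theorem closed_ctxt {Γ : Ctxt} {u : Tm} {T T' : Ty} (h0 : Typed [] u T)
    (h : Typed Γ u T') : Γ = [] := by
  have h1 := typed_vcount h0
  have h2 := typed_vcount h
  simp at h1
  rw [h1] at h2
  exact List.eq_nil_of_length_eq_zero h2.symm

theorem var_inv {Γ : Ctxt} {u : Tm} {T : Ty} (h : Typed Γ u T) :
    ∀ x, u = .var x → Γ = [(x, T)] := by
  induction h with
  | var x A => intro y hy; injection hy with h'; rw [h']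
  | exch Γ Δ x y A B t C h ih =>
      intro z hz
      have := ih z hz
      have h2 := congrArg List.length this
      simp at h2
      omega
  | lam _ _ _ _ _ _ _ => intro z hz; simp [Tm.lam.injEq] at hz
  | app _ _ _ _ _ _ _ _ _ _ => intro z hz; simp at hz
  | pair _ _ _ _ _ _ _ _ _ _ => intro z hz; simp at hz
  | letp _ _ _ _ _ _ _ _ _ _ _ _ _ => intro z hz; simp at hz

theorem app_inv {Γ : Ctxt} {u : Tm} {T : Ty} (h : Typed Γ u T) :
    ∀ a b, u = .app a b →
      ∃ Γ₁ Γ₂ A, (Γ₁ ++ Γ₂).Perm Γ ∧ Typed Γ₁ a (.arrow A T) ∧ Typed Γ₂ b A := by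
  induction h with
  | var x A => intro a b hab; simp at hab
  | exch Γ Δ x y A B t C h ih =>
      intro a b hab
      obtain ⟨Γ₁, Γ₂, A', hp, h1, h2⟩ := ih a b hab
      refine ⟨Γ₁, Γ₂, A', hp.trans (List.Perm.append_left Γ (List.Perm.swap _ _ _)), h1, h2⟩
  | lam _ _ _ _ _ _ _ => intro a b hab; simp at hab
  | app Γ Δ t s A B h1 h2 ih1 ih2 =>
      intro a b hab
      injection hab with e1 e2
      subst e1; subst e2
      exact ⟨Γ, Δ, A, List.Perm.refl _, h1, h2⟩
  | pair _ _ _ _ _ _ _ _ _ _ => intro a b hab; simp at hab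
  | letp _ _ _ _ _ _ _ _ _ _ _ _ _ => intro a b hab; simp at hab

theorem lam_inv {Γ : Ctxt} {u : Tm} {T : Ty} (h : Typed Γ u T) :
    ∀ x b, u = .lam x b →
      ∃ A B Γ', Γ'.Perm Γ ∧ T = .arrow A B ∧ Typed ((x, A) :: Γ') b B := by
  induction h with
  | var x A => intro y b hy; simp at hy
  | exch Γ Δ x y A B t C h ih =>
      intro z b hz
      obtain ⟨A', B', Γ', hp, hT, h1⟩ := ih z b hz
      exact ⟨A', B', Γ', hp.trans (List.Perm.append_left Γ (List.Perm.swap _ _ _)), hT, h1⟩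
  | lam x A Γ t B h ih =>
      intro z b hz
      injection hz with e1 e2
      subst e1; subst e2
      exact ⟨A, B, Γ, List.Perm.refl _, rfl, h⟩
  | app _ _ _ _ _ _ _ _ _ _ => intro z b hz; simp at hz
  | pair _ _ _ _ _ _ _ _ _ _ => intro z b hz; simp at hz
  | letp _ _ _ _ _ _ _ _ _ _ _ _ _ => intro z b hz; simp at hz

theorem app_inv_closed {a b : Tm} {T : Ty} (h : Typed [] (.app a b) T) :
    ∃ A, Typed [] a (.arrow A T) ∧ Typed [] b A := by
  obtain ⟨Γ₁, Γ₂, A, hp, h1, h2⟩ := app_inv h a b rfl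
  have hnil : Γ₁ ++ Γ₂ = [] := hp.eq_nil
  rcases List.append_eq_nil_iff.mp hnil with ⟨e1, e2⟩
  subst e1; subst e2
  exact ⟨A, h1, h2⟩
/-! ### Typings of the composition, renamings, block substitutions -/

theorem comp_typed_intro {t t' : Tm} {A₀ B₀ C₀ : Ty} (x : ℕ)
    (ht : Typed [] t (.arrow A₀ B₀)) (ht' : Typed [] t' (.arrow B₀ C₀)) :
    Typed [] (.lam x (.app t' (.app t (.var x)))) (.arrow A₀ C₀) := by
  have v : Typed [(x, A₀)] (.var x) A₀ := Typed.var x A₀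
  have a1 : Typed ([] ++ [(x, A₀)]) (.app t (.var x)) B₀ := Typed.app _ _ _ _ _ _ ht v
  rw [List.nil_append] at a1
  have a2 : Typed ([] ++ [(x, A₀)]) (.app t' (.app t (.var x))) C₀ :=
    Typed.app _ _ _ _ _ _ ht' a1
  rw [List.nil_append] at a2
  exact Typed.lam x A₀ [] _ C₀ a2

theorem comp_typed_elim {t t' : Tm} {Tt Tt' T : Ty} {x : ℕ}
    (ct : Typed [] t Tt) (ct' : Typed [] t' Tt')
    (h : Typed [] (.lam x (.app t' (.app t (.var x)))) T) :
    ∃ A₀ B₀ C₀, T = .arrow A₀ C₀ ∧ Typed [] t (.arrow A₀ B₀) ∧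
      Typed [] t' (.arrow B₀ C₀) := by
  obtain ⟨A₀, C₀, Γ', hp, hT, hbody⟩ := lam_inv h x _ rfl
  have : Γ' = [] := hp.eq_nil
  subst this
  obtain ⟨Γ₁, Γ₂, B₀, hp2, h1, h2⟩ := app_inv hbody t' (.app t (.var x)) rfl
  have e1 : Γ₁ = [] := closed_ctxt ct' h1
  subst e1
  rw [List.nil_append] at hp2
  have e2 : Γ₂ = [(x, A₀)] := List.perm_singleton.mp hp2
  subst e2
  obtain ⟨Γ₃, Γ₄, A₁, hp3, h3, h4⟩ := app_inv h2 t (.var x) rfl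
  have e3 : Γ₃ = [] := closed_ctxt ct h3
  subst e3
  rw [List.nil_append] at hp3
  have e4 : Γ₄ = [(x, A₀)] := List.perm_singleton.mp hp3
  have e5 := var_inv h4 x rfl
  rw [e4] at e5
  have e6 : A₁ = A₀ := by
    have h8 := (List.cons.injEq _ _ _ _).mp e5
    have h9 : (x, A₀) = (x, A₁) := h8.1
    injection h9 with _ h10
    exact h10.symm
  rw [e6] at h3
  exact ⟨A₀, B₀, C₀, hT, h3, h1⟩

theorem isPT_rename {u : Tm} {P : Ty} (h : IsPT u P) (r rInv : ℕ → ℕ)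
    (hr : ∀ b, rInv (r b) = b) : IsPT u (P.subst (fun b => .tvar (r b))) := by
  constructor
  · exact typed_subst_nil h.1 _
  · intro A' hA'
    obtain ⟨θ, hθ⟩ := h.2 A' hA'
    refine ⟨fun b => θ (rInv b), ?_⟩
    rw [subst_comp]
    have : (fun b => (Ty.tvar (r b)).subst (fun c => θ (rInv c))) = θ := by
      funext b
      show θ (rInv (r b)) = θ b
      rw [hr]
    rw [this]
    exact hθ

/-- A substitution assembled from three variable blocks (mod 4) and three special values. -/
def blockSub (ζ0 ζ1 ζ2 : ℕ → Ty) (X Y Z : Ty) : ℕ → Ty := fun b =>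
  if b = 3 then X else if b = 7 then Y else if b = 11 then Z else
  if b % 4 = 0 then ζ0 (b / 4) else if b % 4 = 1 then ζ1 (b / 4) else
  if b % 4 = 2 then ζ2 (b / 4) else .tvar b

theorem blockSub_e0 (ζ0 ζ1 ζ2 : ℕ → Ty) (X Y Z : Ty) (b : ℕ) :
    blockSub ζ0 ζ1 ζ2 X Y Z (4 * b) = ζ0 b := by
  unfold blockSub
  rw [if_neg (by omega), if_neg (by omega), if_neg (by omega), if_pos (by omega)]
  congr 1
  omega

theorem blockSub_e1 (ζ0 ζ1 ζ2 : ℕ → Ty) (X Y Z : Ty) (b : ℕ) :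
    blockSub ζ0 ζ1 ζ2 X Y Z (4 * b + 1) = ζ1 b := by
  unfold blockSub
  rw [if_neg (by omega), if_neg (by omega), if_neg (by omega), if_neg (by omega),
    if_pos (by omega)]
  congr 1
  omega

theorem blockSub_e2 (ζ0 ζ1 ζ2 : ℕ → Ty) (X Y Z : Ty) (b : ℕ) :
    blockSub ζ0 ζ1 ζ2 X Y Z (4 * b + 2) = ζ2 b := by
  unfold blockSub
  rw [if_neg (by omega), if_neg (by omega), if_neg (by omega), if_neg (by omega),
    if_neg (by omega), if_pos (by omega)]
  congr 1
  omega

theorem blockSub_e3 (ζ0 ζ1 ζ2 : ℕ → Ty) (X Y Z : Ty) :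
    blockSub ζ0 ζ1 ζ2 X Y Z 3 = X := by unfold blockSub; rw [if_pos rfl]

theorem blockSub_e7 (ζ0 ζ1 ζ2 : ℕ → Ty) (X Y Z : Ty) :
    blockSub ζ0 ζ1 ζ2 X Y Z 7 = Y := by unfold blockSub; rw [if_neg (by omega), if_pos rfl]

theorem blockSub_e11 (ζ0 ζ1 ζ2 : ℕ → Ty) (X Y Z : Ty) :
    blockSub ζ0 ζ1 ζ2 X Y Z 11 = Z := by
  unfold blockSub; rw [if_neg (by omega), if_neg (by omega), if_pos rfl]

theorem subst_block (P : Ty) (r : ℕ → ℕ) (σ : ℕ → Ty) (ζ : ℕ → Ty)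
    (h : ∀ b, σ (r b) = ζ b) :
    (P.subst (fun b => .tvar (r b))).subst σ = P.subst ζ := by
  rw [subst_comp]
  congr 1
  funext b
  show σ (r b) = ζ b
  exact h b
/-! ### The key composability lemma -/

theorem key_composability (tt tt' ss : Tm) (AA CC : Ty) (hss : Typed [] ss AA)
    (Pt Ps Pt' P1 : Ty) (hPt : IsPT tt Pt) (hPs : IsPT ss Ps) (hPt' : IsPT tt' Pt')
    (hP1 : IsPT (.app tt ss) P1) (θ2 : ℕ → Ty)
    (hθ2 : Pt'.subst θ2 = .arrow (P1.subst θ2) CC) (x : ℕ) :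
    PolyTypableN (.lam x (.app tt' (.app tt (.var x)))) [AA] CC [ss] := by
  -- the common type B'' of `tt ss`
  have h1 : Typed [] (.app tt ss) (P1.subst θ2) := typed_subst_nil hP1.1 θ2
  obtain ⟨A₀, hT, hS⟩ := app_inv_closed h1
  obtain ⟨ζ1, hζ1⟩ := hPt.2 _ hT
  obtain ⟨ζ2, hζ2⟩ := hPs.2 _ hS
  have ht'C : Typed [] tt' (.arrow (P1.subst θ2) CC) := by
    have h := typed_subst_nil hPt'.1 θ2
    rwa [hθ2] at h
  obtain ⟨ξ2', hξ2'⟩ := hPt'.2 _ ht'C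
  -- renamed apart principal types
  have hUnif : ∀ (ξ1 ξ2 ρ : ℕ → Ty) (A₁ B₁ C₁ : Ty),
      .arrow A₁ B₁ = Pt.subst ξ1 → .arrow B₁ C₁ = Pt'.subst ξ2 →
      Unifies (blockSub ξ1 ξ2 ρ A₁ B₁ C₁)
        [(Pt.subst (fun b => .tvar (4*b)), Ty.arrow (.tvar 3) (.tvar 7)),
         (Pt'.subst (fun b => .tvar (4*b+1)), Ty.arrow (.tvar 7) (.tvar 11))] := by
    intro ξ1 ξ2 ρ A₁ B₁ C₁ e1 e2 p hp
    rcases List.mem_cons.mp hp with hp | hp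
    · subst hp
      show (Pt.subst _).subst _ = (Ty.arrow (.tvar 3) (.tvar 7)).subst _
      rw [subst_block Pt (fun b => 4*b) _ ξ1 (fun b => blockSub_e0 ξ1 ξ2 ρ A₁ B₁ C₁ b), ← e1]
      show _ = Ty.arrow (blockSub ξ1 ξ2 ρ A₁ B₁ C₁ 3) (blockSub ξ1 ξ2 ρ A₁ B₁ C₁ 7)
      rw [blockSub_e3, blockSub_e7]
    rcases List.mem_cons.mp hp with hp | hp
    · subst hp
      show (Pt'.subst _).subst _ = (Ty.arrow (.tvar 7) (.tvar 11)).subst _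
      rw [subst_block Pt' (fun b => 4*b+1) _ ξ2 (fun b => blockSub_e1 ξ1 ξ2 ρ A₁ B₁ C₁ b), ← e2]
      show _ = Ty.arrow (blockSub ξ1 ξ2 ρ A₁ B₁ C₁ 7) (blockSub ξ1 ξ2 ρ A₁ B₁ C₁ 11)
      rw [blockSub_e7, blockSub_e11]
    · simp at hp
  have hU0 := hUnif ζ1 ξ2' ζ2 A₀ (P1.subst θ2) CC hζ1 hξ2'
  obtain ⟨m, hm, hfact0⟩ := unify_complete _ _ hU0
  have hUμ := unify_sound _ m hm
  -- the typing of the composition at the most general type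
  have hμ1 : Pt.subst (fun b => subFn m (4*b)) = .arrow (subFn m 3) (subFn m 7) := by
    have h := hUμ _ (List.mem_cons_self)
    rw [subst_block Pt (fun b => 4*b) (subFn m) (fun b => subFn m (4*b)) (fun b => rfl)] at h
    exact h
  have hμ2 : Pt'.subst (fun b => subFn m (4*b+1)) = .arrow (subFn m 7) (subFn m 11) := by
    have h := hUμ _ (List.mem_cons_of_mem _ (List.mem_cons_self))
    rw [subst_block Pt' (fun b => 4*b+1) (subFn m) (fun b => subFn m (4*b+1)) (fun b => rfl)] at h
    exact h
  have hQt : Typed [] tt (.arrow (subFn m 3) (subFn m 7)) := by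
    have h := typed_subst_nil hPt.1 (fun b => subFn m (4*b))
    rwa [hμ1] at h
  have hQt' : Typed [] tt' (.arrow (subFn m 7) (subFn m 11)) := by
    have h := typed_subst_nil hPt'.1 (fun b => subFn m (4*b+1))
    rwa [hμ2] at h
  have hQ : Typed [] (.lam x (.app tt' (.app tt (.var x))))
      (.arrow (subFn m 3) (subFn m 11)) := comp_typed_intro x hQt hQt'
  -- principality
  have hIsPT : IsPT (.lam x (.app tt' (.app tt (.var x))))
      (.arrow (subFn m 3) (subFn m 11)) := by
    refine ⟨hQ, fun T hTy => ?_⟩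
    obtain ⟨A₁, B₁, C₁, rfl, h_t, h_t'⟩ := comp_typed_elim hPt.1 hPt'.1 hTy
    obtain ⟨ξ1, hξ1⟩ := hPt.2 _ h_t
    obtain ⟨ξ2, hξ2⟩ := hPt'.2 _ h_t'
    have hU := hUnif ξ1 ξ2 Ty.tvar A₁ B₁ C₁ hξ1 hξ2
    obtain ⟨m2, hm2, hfact⟩ := unify_complete _ _ hU
    rw [hm] at hm2
    injection hm2 with e
    subst e
    refine ⟨blockSub ξ1 ξ2 Ty.tvar A₁ B₁ C₁, ?_⟩
    show _ = Ty.arrow ((subFn m 3).subst _) ((subFn m 11).subst _)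
    rw [← hfact 3, ← hfact 11, blockSub_e3, blockSub_e11]
  -- assemble
  refine ⟨⟨[subFn m 3], subFn m 11, rfl, hQ⟩, List.Forall₂.cons hss List.Forall₂.nil,
    blockSub ζ1 ξ2' ζ2 A₀ (P1.subst θ2) CC, .arrow (subFn m 3) (subFn m 11), [A₀],
    hIsPT, ?_, ?_⟩
  · show Ty.arrow ((subFn m 3).subst _) ((subFn m 11).subst _) = _
    rw [← hfact0 3, ← hfact0 11, blockSub_e3, blockSub_e11]
    rfl
  · refine List.Forall₂.cons ⟨Ps.subst (fun b => .tvar (4*b+2)), ?_, ?_⟩ List.Forall₂.nil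
    · exact isPT_rename hPs (fun b => 4*b+2) (fun b => (b-2)/4) (fun b => by show (4*b+2-2)/4 = b; omega)
    · rw [subst_block Ps (fun b => 4*b+2) _ ζ2 (fun b => blockSub_e2 ζ1 ξ2' ζ2 _ _ _ b)]
      exact hζ2.symm

/-- **Composability of Poly-typable Terms.** If `t` is poly-typable by `A->B` with
respect to closed terms `s` and `s'` of type `A`, and `t'` is poly-typable by `B->C`
with respect to `t s` and `t s'`, then `fn x=>(t'(t x))` is poly-typable by `A->C`
with respect to `s` and `s'`. -/
theorem polytypable_composition (A B C : Ty) (t t' s s' : Tm)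
    (hs : Typed [] s A) (hs' : Typed [] s' A)
    (ht1 : PolyTypableN t [A] B [s]) (ht2 : PolyTypableN t [A] B [s'])
    (ht'1 : PolyTypableN t' [B] C [Tm.app t s]) (ht'2 : PolyTypableN t' [B] C [Tm.app t s'])
    (x : ℕ) :
    PolyTypableN (.lam x (.app t' (.app t (.var x)))) [A] C [s] ∧
    PolyTypableN (.lam x (.app t' (.app t (.var x)))) [A] C [s'] := by
  obtain ⟨-, -, θ1, Pt, As1, hPt, hsub1, hf1⟩ := ht1
  obtain ⟨-, -, θ1', Pt2, As2, hPt2, hsub2, hf2⟩ := ht2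
  obtain ⟨-, -, θ2, Pt', Bs1, hPt', hsub3, hf3⟩ := ht'1
  obtain ⟨-, -, θ2', Pt'2, Bs2, hPt'2, hsub4, hf4⟩ := ht'2
  rcases hf1 with _ | ⟨⟨Ps, hPs, hPse⟩, hnil1⟩
  cases hnil1
  rcases hf2 with _ | ⟨⟨Ps', hPs', hPse'⟩, hnil2⟩
  cases hnil2
  rcases hf3 with _ | ⟨⟨P1, hP1, hP1e⟩, hnil3⟩
  cases hnil3
  rcases hf4 with _ | ⟨⟨P1', hP1', hP1e'⟩, hnil4⟩
  cases hnil4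
  constructor
  · refine key_composability t t' s A C hs Pt Ps Pt' P1 hPt hPs hPt' hP1 θ2 ?_ x
    rw [hsub3, ← hP1e]
    rfl
  · refine key_composability t t' s' A C hs' Pt2 Ps' Pt'2 P1' hPt2 hPs' hPt'2 hP1' θ2' ?_ x
    rw [hsub4, ← hP1e']
    rfl
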